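/- Let N < d_x, let X_ε ∈ ℝ^{d_x×N} have rank N (so X_εᵀX_ε is invertible), and let Y ∈ ℝ^{d_y×N}. Let d_1 ∈ ℕ, set p := min(d_x, d_1, d_y), and assume either rank(Y) ≤ p or the p-th largest eigenvalue of YYᵀ is strictly greater than its (p+1)-th largest eigenvalue. Then a pair (W_2, W_1) ∈ ℝ^{d_y×d_1} × ℝ^{d_1×d_x} globally minimizes the loss ‖W_2W_1X_ε − Y‖_F² if and only if W_2W_1 = U_pU_pᵀ Y (X_εᵀX_ε)^{-1} X_εᵀ + R for some R ∈ ℝ^{d_y×d_x} with row(R) ⊆ col(X_ε)^⊥. -/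

import Mathlib

set_option maxHeartbeats 1000000

open Matrix

noncomputable section

/-- Squared Frobenius norm ‖M‖_F² of a real matrix. -/
def frobSq {m n : ℕ} (M : Matrix (Fin m) (Fin n) ℝ) : ℝ := ∑ i, ∑ j, (M i j) ^ 2

/-- `row(R) ⊆ col(X)^⊥`: every row of `R` is orthogonal to the column space of `X`
(the span of the columns of `X`, i.e. of the rows of `Xᵀ`). -/
def rowsInColPerp {a b c : ℕ} (R : Matrix (Fin a) (Fin b) ℝ)
    (X : Matrix (Fin b) (Fin c) ℝ) : Prop :=
  ∀ i, ∀ v ∈ Submodule.span ℝ (Set.range Xᵀ), ∑ k, R i k * v k = 0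

lemma exists_proj {dy N p : ℕ} (C : Matrix (Fin dy) (Fin N) ℝ) (hC : C.rank ≤ p) :
    ∃ P : Matrix (Fin N) (Fin N) ℝ, Pᵀ = P ∧ P * P = P ∧ C * P = C ∧ P.trace ≤ (p : ℝ) := by
  classical
  set E := EuclideanSpace ℝ (Fin N)
  let e : (Fin N → ℝ) ≃ₗ[ℝ] E := (WithLp.linearEquiv 2 ℝ (Fin N → ℝ)).symm
  let S : Submodule ℝ E := Submodule.span ℝ (Set.range fun i => e (C i))
  have hSfin : Module.finrank ℝ S ≤ p := by
    have h1 : S = Submodule.map (e : (Fin N → ℝ) →ₗ[ℝ] E)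
        (Submodule.span ℝ (Set.range C.row)) := by
      rw [Submodule.map_span]
      congr 1
      rw [← Set.range_comp]
      rfl
    have h2 : Module.finrank ℝ S = Module.finrank ℝ (Submodule.span ℝ (Set.range C.row)) := by
      rw [h1]
      exact (Submodule.equivMapOfInjective _ e.injective _).symm.finrank_eq
    rw [h2, ← Matrix.rank_eq_finrank_span_row]
    exact hC
  set r := Module.finrank ℝ S with hr
  let b : OrthonormalBasis (Fin r) ℝ S := stdOrthonormalBasis ℝ S
  let q : Fin r → Fin N → ℝ := fun i => (b i : E)
  let G : Matrix (Fin r) (Fin N) ℝ := Matrix.of q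
  have hinner : ∀ (x y : E), (inner ℝ x y : ℝ) = ∑ k, x k * y k := by
    intro x y
    rw [PiLp.inner_apply]
    simp [RCLike.inner_apply, mul_comm]
  have hGG : G * Gᵀ = 1 := by
    ext i j
    have := b.orthonormal
    rw [orthonormal_iff_ite] at this
    have h := this i j
    rw [Submodule.coe_inner, hinner] at h
    simp only [Matrix.mul_apply, Matrix.one_apply, G, Matrix.of_apply, Matrix.transpose_apply]
    convert h using 2
  refine ⟨Gᵀ * G, ?_, ?_, ?_, ?_⟩
  · rw [Matrix.transpose_mul, Matrix.transpose_transpose]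
  · calc Gᵀ * G * (Gᵀ * G) = Gᵀ * (G * Gᵀ) * G := by rw [Matrix.mul_assoc, Matrix.mul_assoc, Matrix.mul_assoc]
    _ = Gᵀ * G := by rw [hGG, Matrix.mul_one]
  · -- C * (Gᵀ * G) = C
    ext a k
    have hmem : e (C a) ∈ S := Submodule.subset_span ⟨a, rfl⟩
    have hrepr := b.sum_repr' ⟨e (C a), hmem⟩
    have hco : ∑ i, (inner ℝ (b i) (⟨e (C a), hmem⟩ : S) : ℝ) • (b i : E) = e (C a) := by
      have := congrArg (Subtype.val) hrepr
      rw [Submodule.coe_sum] at this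
      simpa using this
    have hco2 : ∀ i, (inner ℝ (b i) (⟨e (C a), hmem⟩ : S) : ℝ) = ∑ l, q i l * C a l := by
      intro i
      rw [Submodule.coe_inner, hinner]
      rfl
    have hcok := congrFun (congrArg (fun (x : E) => (x : Fin N → ℝ)) hco) k
    simp only [hco2] at hcok
    have hek : e (C a) k = C a k := rfl
    have hcok2 : ∑ i, (∑ l, q i l * C a l) * q i k = C a k := by
      rw [← hek, ← hcok]
      rw [WithLp.ofLp_sum, Finset.sum_apply]
      exact Finset.sum_congr rfl fun i _ => rfl
    rw [Matrix.mul_apply]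
    calc ∑ l, C a l * (Gᵀ * G) l k
        = ∑ l, ∑ i, C a l * (q i l * q i k) := by
          refine Finset.sum_congr rfl fun l _ => ?_
          rw [Matrix.mul_apply, Finset.mul_sum]
          rfl
      _ = ∑ i, (∑ l, q i l * C a l) * q i k := by
          rw [Finset.sum_comm]
          refine Finset.sum_congr rfl fun i _ => ?_
          rw [Finset.sum_mul]
          refine Finset.sum_congr rfl fun l _ => by ring
      _ = C a k := hcok2
  · have h1 : (Gᵀ * G).trace = (G * Gᵀ).trace := Matrix.trace_mul_comm _ _
    rw [h1, hGG, Matrix.trace_one]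
    rw [Fintype.card_fin]; exact_mod_cast hSfin

lemma frobSq_eq_trace {m n : ℕ} (M : Matrix (Fin m) (Fin n) ℝ) :
    frobSq M = (M * Mᵀ).trace := by
  simp [frobSq, Matrix.trace, Matrix.mul_apply, Matrix.diag, sq]

lemma frobSq_nonneg {m n : ℕ} (M : Matrix (Fin m) (Fin n) ℝ) : 0 ≤ frobSq M :=
  Finset.sum_nonneg fun _ _ => Finset.sum_nonneg fun _ _ => sq_nonneg _

lemma frobSq_eq_zero {m n : ℕ} {M : Matrix (Fin m) (Fin n) ℝ} (h : frobSq M = 0) : M = 0 := by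
  ext i j
  have h1 : ∀ i ∈ Finset.univ, (0:ℝ) ≤ ∑ j, (M i j)^2 :=
    fun _ _ => Finset.sum_nonneg fun _ _ => sq_nonneg _
  have h2 := (Finset.sum_eq_zero_iff_of_nonneg h1).1 h i (Finset.mem_univ i)
  have h3 := (Finset.sum_eq_zero_iff_of_nonneg (fun _ _ => sq_nonneg _)).1 h2 j (Finset.mem_univ j)
  simpa using pow_eq_zero_iff (n := 2) (by norm_num) |>.1 h3

lemma diag_mul_transpose {m n : ℕ} (A : Matrix (Fin m) (Fin n) ℝ) (i : Fin m) :
    (A * Aᵀ) i i = ∑ j, (A i j)^2 := by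
  simp [Matrix.mul_apply, sq]

lemma diag_mul_transpose_nonneg {m n : ℕ} (A : Matrix (Fin m) (Fin n) ℝ) (i : Fin m) :
    0 ≤ (A * Aᵀ) i i := by
  rw [diag_mul_transpose]; exact Finset.sum_nonneg fun _ _ => sq_nonneg _

lemma row_eq_zero_of_diag {m n : ℕ} {A : Matrix (Fin m) (Fin n) ℝ} {i : Fin m}
    (h : (A * Aᵀ) i i = 0) : ∀ j, A i j = 0 := by
  rw [diag_mul_transpose] at h
  intro j
  have h3 := (Finset.sum_eq_zero_iff_of_nonneg (fun _ _ => sq_nonneg _)).1 h j (Finset.mem_univ j)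
  simpa using pow_eq_zero_iff (n := 2) (by norm_num) |>.1 h3

lemma sum_castLE {n p : ℕ} (hp : p ≤ n) (f : Fin n → ℝ) :
    ∑ j : Fin p, f (Fin.castLE hp j) = ∑ i : Fin n, if (i : ℕ) < p then f i else 0 := by
  rw [← Finset.sum_filter]
  refine Finset.sum_bij (fun j _ => Fin.castLE hp j) ?_ ?_ ?_ ?_
  · intro a _; simp [Fin.castLE]
  · intro a _ b _ h; exact Fin.castLE_injective hp h
  · intro b hb
    simp only [Finset.mem_filter] at hb
    exact ⟨⟨(b:ℕ), hb.2⟩, Finset.mem_univ _, by ext; simp⟩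
  · intro a _; rfl


def truncRows (p : ℕ) {dy N : ℕ} (Z : Matrix (Fin dy) (Fin N) ℝ) : Matrix (Fin dy) (Fin N) ℝ :=
  Matrix.of fun i j => if (i:ℕ) < p then Z i j else 0


lemma split_proj {m n : ℕ} (E : Matrix (Fin m) (Fin n) ℝ) (P : Matrix (Fin n) (Fin n) ℝ)
    (hPt : Pᵀ = P) (hPi : P * P = P) :
    E * Eᵀ = (E * P) * (E * P)ᵀ + (E - E * P) * (E - E * P)ᵀ := by
  have hEPP : E * P * P = E * P := by rw [Matrix.mul_assoc, hPi]
  rw [Matrix.transpose_mul, hPt, Matrix.transpose_sub, Matrix.transpose_mul, hPt]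
  simp only [Matrix.mul_sub, Matrix.sub_mul, ← Matrix.mul_assoc]
  simp only [hEPP]
  abel

lemma EY {dy N p : ℕ} (σ : Fin dy → ℝ) (hσ : Antitone σ)
    (Z : Matrix (Fin dy) (Fin N) ℝ) (hZZ : Z * Zᵀ = Matrix.diagonal σ)
    (hgap : (∀ i : Fin dy, p ≤ (i:ℕ) → σ i = 0) ∨
      ∃ (_ : 1 ≤ p) (h2 : p < dy), σ ⟨p, h2⟩ < σ ⟨p - 1, by omega⟩)
    (C : Matrix (Fin dy) (Fin N) ℝ) (hC : C.rank ≤ p) :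
    frobSq (truncRows p Z - Z) ≤ frobSq (C - Z) ∧
      (frobSq (C - Z) ≤ frobSq (truncRows p Z - Z) → C = truncRows p Z) := by
  classical
  obtain ⟨P, hPt, hPi, hCP, hPtr⟩ := exists_proj C hC
  -- basic facts about σ
  have hdiag : ∀ i, (Z * Zᵀ) i i = σ i := by
    intro i; rw [hZZ]; simp
  have hσsum : ∀ i, σ i = ∑ j, (Z i j)^2 := by
    intro i; rw [← hdiag, diag_mul_transpose]
  have hσ0 : ∀ i, 0 ≤ σ i := by
    intro i; rw [hσsum]; exact Finset.sum_nonneg fun _ _ => sq_nonneg _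
  have hZrow : ∀ i, σ i = 0 → ∀ j, Z i j = 0 := by
    intro i h
    exact row_eq_zero_of_diag (by rw [diag_mul_transpose, ← hσsum]; exact h)
  -- t
  set t : Fin dy → ℝ := fun i => (Z * P * Zᵀ) i i with htdef
  have hZPP : Z * P * Zᵀ = (Z * P) * (Z * P)ᵀ := by
    rw [Matrix.transpose_mul, hPt, ← Matrix.mul_assoc (Z*P) P Zᵀ, Matrix.mul_assoc Z P P, hPi]
  have hkey : Z * Zᵀ - Z * P * Zᵀ = (Z - Z * P) * (Z - Z * P)ᵀ := by
    rw [split_proj Z P hPt hPi, ← hZPP]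
    abel
  have ht0 : ∀ i, 0 ≤ t i := by
    intro i
    have := diag_mul_transpose_nonneg (Z * P) i
    rwa [← hZPP] at this
  have ht1 : ∀ i, t i ≤ σ i := by
    intro i
    have h := diag_mul_transpose_nonneg (Z - Z * P) i
    rw [← hkey, Matrix.sub_apply, hdiag] at h
    simp only [htdef]
    linarith
  -- s
  set s : Fin dy → ℝ := fun i => if σ i = 0 then 0 else (σ i)⁻¹ * t i with hsdef
  have hσpos : ∀ i, σ i ≠ 0 → 0 < σ i := fun i h => lt_of_le_of_ne (hσ0 i) (Ne.symm h)
  have hts : ∀ i, t i = σ i * s i := by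
    intro i
    by_cases h : σ i = 0
    · have h1 := ht0 i; have h2 := ht1 i; rw [h] at h2
      rw [h, zero_mul]
      linarith
    · simp only [hsdef, if_neg h]
      field_simp
  have hs0 : ∀ i, 0 ≤ s i := by
    intro i
    by_cases h : σ i = 0
    · simp [hsdef, h]
    · simp only [hsdef, if_neg h]
      exact mul_nonneg (inv_nonneg.2 (hσ0 i)) (ht0 i)
  have hs1 : ∀ i, s i ≤ 1 := by
    intro i
    by_cases h : σ i = 0
    · simp [hsdef, h]
    · simp only [hsdef, if_neg h]
      rw [inv_mul_le_iff₀ (hσpos i h), mul_one]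
      exact ht1 i
  -- sum of s bounded by p
  set d : Fin dy → ℝ := fun i => if σ i = 0 then 0 else (σ i)⁻¹ with hddef
  set D : Matrix (Fin dy) (Fin dy) ℝ := Matrix.diagonal d with hDdef
  set M : Matrix (Fin N) (Fin N) ℝ := Zᵀ * D * Z with hMdef
  have hMt : Mᵀ = M := by
    rw [hMdef, Matrix.transpose_mul, Matrix.transpose_mul, Matrix.transpose_transpose,
      Matrix.diagonal_transpose, Matrix.mul_assoc]
  have hfun : (fun i => d i * σ i * d i) = d := by
    funext i
    by_cases h : σ i = 0
    · simp [hddef, h]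
    · simp only [hddef, if_neg h]
      rw [inv_mul_cancel₀ h, one_mul]
  have hDD : D * Matrix.diagonal σ * D = D := by
    rw [hDdef, Matrix.diagonal_mul_diagonal, Matrix.diagonal_mul_diagonal]
    exact congrArg Matrix.diagonal hfun
  have hMi : M * M = M := by
    rw [hMdef]
    calc Zᵀ * D * Z * (Zᵀ * D * Z) = Zᵀ * (D * (Z * Zᵀ) * D) * Z := by
          simp only [Matrix.mul_assoc]
      _ = Zᵀ * D * Z := by
          rw [hZZ, hDD]
  have h1Mt : (1 - M)ᵀ = 1 - M := by rw [Matrix.transpose_sub, Matrix.transpose_one, hMt]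
  have h1Mi : (1 - M) * (1 - M) = 1 - M := by
    simp only [Matrix.mul_sub, Matrix.sub_mul, Matrix.one_mul, Matrix.mul_one, hMi]
    abel
  have htrP1M : 0 ≤ (P * (1 - M)).trace := by
    have e1 : (P * (1 - M)) * (P * (1 - M))ᵀ = P * (1 - M) * P := by
      rw [Matrix.transpose_mul, h1Mt, hPt, ← Matrix.mul_assoc (P*(1-M)) (1-M) P,
        Matrix.mul_assoc P (1-M) (1-M), h1Mi]
    have e2 : (P * (1 - M) * P).trace = (P * (1 - M)).trace := by
      rw [Matrix.trace_mul_cycle, hPi]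
    have e3 := frobSq_nonneg (P * (1 - M))
    rw [frobSq_eq_trace, e1, e2] at e3
    exact e3
  have hsum : ∑ i, s i ≤ (p : ℝ) := by
    have e1 : ∑ i, s i = (D * (Z * P * Zᵀ)).trace := by
      rw [Matrix.trace]
      refine (Finset.sum_congr rfl fun i _ => ?_).symm
      rw [Matrix.diag]
      rw [Matrix.diagonal_mul]
      simp only [hsdef, hddef, htdef]
      by_cases h : σ i = 0 <;> simp [h]
    have e2 : (D * (Z * P * Zᵀ)).trace = (P * M).trace := by
      rw [hMdef, show D * (Z * P * Zᵀ) = (D*Z*P)*Zᵀ from by simp only [Matrix.mul_assoc],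
        Matrix.trace_mul_comm, show Zᵀ * (D*Z*P) = (Zᵀ*D*Z)*P from by simp only [Matrix.mul_assoc],
        Matrix.trace_mul_comm]
    have e3 : (P * M).trace = P.trace - (P * (1 - M)).trace := by
      rw [Matrix.mul_sub, Matrix.mul_one, Matrix.trace_sub]
      ring
    rw [e1, e2, e3]
    linarith [hPtr, htrP1M]
  -- frobSq identities
  have hsub_comm : ∀ (A B : Matrix (Fin dy) (Fin N) ℝ), frobSq (A - B) = frobSq (B - A) := by
    intro A B
    unfold frobSq
    refine Finset.sum_congr rfl fun i _ => Finset.sum_congr rfl fun j _ => ?_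
    simp only [Matrix.sub_apply]
    ring
  have hfrobC : frobSq (C - Z) = frobSq (C - Z * P) + (∑ i, σ i - ∑ i, t i) := by
    have hDP : (C - Z) * P = C - Z * P := by rw [Matrix.sub_mul, hCP]
    have e1 : frobSq (C - Z) = frobSq ((C-Z) * P) + frobSq ((C-Z) - (C-Z)*P) := by
      rw [frobSq_eq_trace, frobSq_eq_trace, frobSq_eq_trace, split_proj (C-Z) P hPt hPi,
        Matrix.trace_add]
    have e2 : (C - Z) - (C - Z) * P = Z * P - Z := by
      rw [hDP]; abel
    have e3 : frobSq (Z * P - Z) = ∑ i, σ i - ∑ i, t i := by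
      rw [hsub_comm, frobSq_eq_trace, ← hkey, Matrix.trace_sub, hZZ, Matrix.trace_diagonal]
      rfl
    rw [e1, e2, e3, hDP]
  have hfrobT : frobSq (truncRows p Z - Z) = ∑ i : Fin dy, (if (i:ℕ) < p then (0:ℝ) else σ i) := by
    unfold frobSq
    refine Finset.sum_congr rfl fun i _ => ?_
    by_cases h : (i:ℕ) < p
    · simp [truncRows, h, sub_self]
    · simp only [truncRows, Matrix.sub_apply, Matrix.of_apply, if_neg h]
      rw [hσsum i]
      refine Finset.sum_congr rfl fun j _ => by ring
  -- the key inequality and its equality case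
  have key : ((∑ i : Fin dy, t i) ≤ ∑ i : Fin dy, (if (i:ℕ) < p then σ i else 0)) ∧
      ((∑ i : Fin dy, t i) = (∑ i : Fin dy, (if (i:ℕ) < p then σ i else 0)) →
        ∀ i : Fin dy, (if (i:ℕ) < p then σ i * (1 - s i) else σ i * s i) = 0) := by
    rcases hgap with hz | ⟨h1, h2, hgt⟩
    · -- degenerate case: σ vanishes from p on
      have hterm : ∀ i : Fin dy, (if (i:ℕ) < p then σ i else 0) - t i
          = if (i:ℕ) < p then σ i * (1 - s i) else σ i * s i := by
        intro i
        by_cases h : (i:ℕ) < p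
        · rw [if_pos h, if_pos h, hts i]; ring
        · rw [if_neg h, if_neg h, hts i, hz i (le_of_not_gt h)]; ring
      have hterm0 : ∀ i : Fin dy, 0 ≤ (if (i:ℕ) < p then σ i else 0) - t i := by
        intro i; rw [hterm i]
        by_cases h : (i:ℕ) < p
        · rw [if_pos h]; exact mul_nonneg (hσ0 i) (by linarith [hs1 i])
        · rw [if_neg h, hz i (le_of_not_gt h), zero_mul]
      constructor
      · have h0 := Finset.sum_nonneg (fun i (_ : i ∈ Finset.univ) => hterm0 i)
        rw [Finset.sum_sub_distrib] at h0; linarith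
      · intro heq i
        have hsum0 : ∑ i : Fin dy, ((if (i:ℕ) < p then σ i else 0) - t i) = 0 := by
          rw [Finset.sum_sub_distrib, heq]; ring
        have h0 := (Finset.sum_eq_zero_iff_of_nonneg
          (fun i (_ : i ∈ Finset.univ) => hterm0 i)).1 hsum0 i (Finset.mem_univ i)
        rw [hterm i] at h0; exact h0
    · -- gap case
      have hσb_pos : 0 < σ ⟨p - 1, by omega⟩ := lt_of_le_of_lt (hσ0 _) hgt
      have hlo : ∀ i : Fin dy, (i:ℕ) < p → σ ⟨p - 1, by omega⟩ ≤ σ i := by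
        intro i h
        exact hσ (by rw [Fin.le_def]; simp; omega)
      have hhi : ∀ i : Fin dy, p ≤ (i:ℕ) → σ i ≤ σ ⟨p, h2⟩ := by
        intro i h
        exact hσ (by rw [Fin.le_def]; simpa)
      set σb := σ ⟨p - 1, by omega⟩ with hσbdef
      set σp := σ ⟨p, h2⟩ with hσpdef
      have hterm : ∀ i : Fin dy, (if (i:ℕ) < p then σb * (1 - s i) else -(σp * s i))
          ≤ (if (i:ℕ) < p then σ i else 0) - t i := by
        intro i; by_cases h : (i:ℕ) < p
        · rw [if_pos h, if_pos h, hts i]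
          have h3 := hlo i h; have h4 := hs1 i
          nlinarith
        · rw [if_neg h, if_neg h, hts i]
          have h3 := hhi i (le_of_not_gt h); have h4 := hs0 i
          nlinarith
      have hcount : ∑ i : Fin dy, (if (i:ℕ) < p then (1:ℝ) else 0) = p := by
        rw [← sum_castLE (le_of_lt h2) (fun _ => (1:ℝ))]; simp
      set a := ∑ i : Fin dy, (if (i:ℕ) < p then 1 - s i else 0) with hadef
      set b := ∑ i : Fin dy, (if (i:ℕ) < p then (0:ℝ) else s i) with hbdef
      have hb0 : 0 ≤ b := Finset.sum_nonneg fun i _ => by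
        by_cases h : (i:ℕ) < p
        · simp [h]
        · simp only [if_neg h]; exact hs0 i
      have hab : b ≤ a := by
        have e : a - b = (∑ i : Fin dy, (if (i:ℕ) < p then (1:ℝ) else 0)) - ∑ i, s i := by
          rw [hadef, hbdef, ← Finset.sum_sub_distrib, ← Finset.sum_sub_distrib]
          refine Finset.sum_congr rfl fun i _ => ?_
          by_cases h : (i:ℕ) < p <;> simp [h]
        rw [hcount] at e; linarith [hsum]
      have hsum_lhs : ∑ i : Fin dy, (if (i:ℕ) < p then σb * (1 - s i) else -(σp * s i))
          = σb * a - σp * b := by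
        rw [hadef, hbdef, Finset.mul_sum, Finset.mul_sum, ← Finset.sum_sub_distrib]
        refine Finset.sum_congr rfl fun i _ => ?_
        by_cases h : (i:ℕ) < p <;> simp [h]
      have hge : σb * a - σp * b ≤ ∑ i : Fin dy, ((if (i:ℕ) < p then σ i else 0) - t i) := by
        rw [← hsum_lhs]; exact Finset.sum_le_sum fun i _ => hterm i
      have hd : (0:ℝ) < σb - σp := by linarith [hgt]
      have hchain : (σb - σp) * b ≤ σb * a - σp * b := by
        nlinarith [mul_nonneg (le_of_lt hσb_pos) (sub_nonneg.2 hab)]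
      constructor
      · have h0 : (0:ℝ) ≤ (σb - σp) * b := mul_nonneg (le_of_lt hd) hb0
        have h1' := le_trans (le_trans h0 hchain) hge
        rw [Finset.sum_sub_distrib] at h1'; linarith
      · intro heq i
        have hzero : ∑ i : Fin dy, ((if (i:ℕ) < p then σ i else 0) - t i) = 0 := by
          rw [Finset.sum_sub_distrib, heq]; ring
        rw [hzero] at hge
        have hble : b ≤ 0 := by nlinarith [hchain, hd]
        have hb_eq : b = 0 := le_antisymm hble hb0
        have hsz : ∀ i : Fin dy, p ≤ (i:ℕ) → s i = 0 := by
          intro i h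
          have hnn : ∀ j ∈ (Finset.univ : Finset (Fin dy)),
              (0:ℝ) ≤ (if (j:ℕ) < p then (0:ℝ) else s j) := by
            intro j _
            by_cases hj : (j:ℕ) < p
            · simp [hj]
            · simp only [if_neg hj]; exact hs0 j
          have h0 := (Finset.sum_eq_zero_iff_of_nonneg hnn).1 (by rw [← hbdef]; exact hb_eq)
            i (Finset.mem_univ i)
          rwa [if_neg (not_lt.2 h)] at h0
        by_cases h : (i:ℕ) < p
        · rw [if_pos h]
          have hterm_eq : ∀ j : Fin dy, (if (j:ℕ) < p then σ j else 0) - t j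
              = if (j:ℕ) < p then σ j * (1 - s j) else 0 := by
            intro j; by_cases hj : (j:ℕ) < p
            · rw [if_pos hj, if_pos hj, hts j]; ring
            · rw [if_neg hj, if_neg hj, hts j, hsz j (le_of_not_gt hj), mul_zero]; ring
          have hnn : ∀ j ∈ (Finset.univ : Finset (Fin dy)),
              (0:ℝ) ≤ (if (j:ℕ) < p then σ j * (1 - s j) else 0) := by
            intro j _
            by_cases hj : (j:ℕ) < p
            · rw [if_pos hj]; exact mul_nonneg (hσ0 j) (by linarith [hs1 j])
            · rw [if_neg hj]
          have hzero2 : ∑ j : Fin dy, (if (j:ℕ) < p then σ j * (1 - s j) else 0) = 0 := by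
            rw [← Finset.sum_congr rfl (fun j (_ : j ∈ Finset.univ) => hterm_eq j)]
            exact hzero
          have h0 := (Finset.sum_eq_zero_iff_of_nonneg hnn).1 hzero2 i (Finset.mem_univ i)
          rwa [if_pos h] at h0
        · rw [if_neg h, hsz i (le_of_not_gt h), mul_zero]
  -- put it together
  have hsplitσ : ∑ i : Fin dy, σ i = (∑ i : Fin dy, (if (i:ℕ) < p then σ i else 0))
      + ∑ i : Fin dy, (if (i:ℕ) < p then (0:ℝ) else σ i) := by
    rw [← Finset.sum_add_distrib]
    refine Finset.sum_congr rfl fun i _ => ?_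
    by_cases h : (i:ℕ) < p <;> simp [h]
  constructor
  · rw [hfrobT, hfrobC]
    linarith [frobSq_nonneg (C - Z * P), key.1, hsplitσ]
  · intro hle
    rw [hfrobT, hfrobC] at hle
    have h1 : frobSq (C - Z * P) = 0 :=
      le_antisymm (by linarith [key.1, hsplitσ]) (frobSq_nonneg _)
    have h2 : (∑ i : Fin dy, t i) = ∑ i : Fin dy, (if (i:ℕ) < p then σ i else 0) := by
      have := frobSq_nonneg (C - Z * P)
      linarith [key.1, hsplitσ]
    have hCZP : C = Z * P := sub_eq_zero.1 (frobSq_eq_zero h1)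
    have hterm := key.2 h2
    have hZPtrunc : Z * P = truncRows p Z := by
      ext i j
      by_cases h : (i:ℕ) < p
      · have hx := hterm i; rw [if_pos h] at hx
        rcases mul_eq_zero.1 hx with hσz | hsz1
        · have hZ0 := hZrow i hσz
          have hZP0 : (Z * P) i j = 0 := by
            rw [Matrix.mul_apply]
            exact Finset.sum_eq_zero fun k _ => by rw [hZ0 k, zero_mul]
          rw [hZP0]; simp [truncRows, h, hZ0 j]
        · have hsi : s i = 1 := by linarith
          have hti : (Z * P * Zᵀ) i i = σ i := by
            have : t i = σ i := by rw [hts i, hsi, mul_one]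
            exact this
          have hdz : ((Z - Z*P) * (Z - Z*P)ᵀ) i i = 0 := by
            rw [← hkey, Matrix.sub_apply, hdiag, hti]; ring
          have h0 := row_eq_zero_of_diag hdz j
          rw [Matrix.sub_apply] at h0
          simp only [truncRows, Matrix.of_apply, if_pos h]
          linarith
      · have hx := hterm i; rw [if_neg h] at hx
        rcases mul_eq_zero.1 hx with hσz | hsz0
        · have hZ0 := hZrow i hσz
          have hZP0 : (Z * P) i j = 0 := by
            rw [Matrix.mul_apply]
            exact Finset.sum_eq_zero fun k _ => by rw [hZ0 k, zero_mul]
          rw [hZP0]; simp [truncRows, h]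
        · have hti : (Z * P * Zᵀ) i i = 0 := by
            have : t i = 0 := by rw [hts i, hsz0, mul_zero]
            exact this
          have hdz : ((Z*P) * (Z*P)ᵀ) i i = 0 := by rw [← hZPP]; exact hti
          have h0 := row_eq_zero_of_diag hdz j
          rw [h0]; simp [truncRows, h]
    rw [hCZP, hZPtrunc]

lemma pad_mul {a c p q : ℕ} (hpq : p ≤ q) (A : Matrix (Fin a) (Fin p) ℝ)
    (B : Matrix (Fin p) (Fin c) ℝ) :
    (Matrix.of fun i (j : Fin q) => if h : (j:ℕ) < p then A i ⟨j, h⟩ else 0) *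
      (Matrix.of fun (j : Fin q) k => if h : (j:ℕ) < p then B ⟨j, h⟩ k else 0) = A * B := by
  classical
  ext i k
  rw [Matrix.mul_apply, Matrix.mul_apply]
  set f : Fin q → ℝ := fun j => if h : (j:ℕ) < p then A i ⟨j, h⟩ * B ⟨j, h⟩ k else 0 with hfdef
  calc ∑ j : Fin q, (Matrix.of fun i (j : Fin q) => if h : (j:ℕ) < p then A i ⟨j, h⟩ else 0) i j *
        (Matrix.of fun (j : Fin q) k => if h : (j:ℕ) < p then B ⟨j, h⟩ k else 0) j k
      = ∑ j : Fin q, (if (j:ℕ) < p then f j else 0) := by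
        refine Finset.sum_congr rfl fun j _ => ?_
        by_cases h : (j:ℕ) < p
        · simp [hfdef, h]
        · simp [hfdef, h]
    _ = ∑ j : Fin p, f (Fin.castLE hpq j) := (sum_castLE hpq f).symm
    _ = ∑ j : Fin p, A i j * B j k := by
        refine Finset.sum_congr rfl fun j _ => ?_
        simp [hfdef]

/-- characterization of the global minimizers of the base loss
`‖W₂W₁X_ε − Y‖_F²` in the undersampled regime `N < d_x`.
Here `σ` is the decreasing list of eigenvalues of `YYᵀ`, `V` an orthogonal matrix of
corresponding eigenvectors, and `U = U_p` consists of the first `p = min(d_x,d_1,d_y)`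
columns of `V` (eigenvectors for the `p` largest eigenvalues). -/
theorem stmt3
    (N dx dy d1 : ℕ) (hN : N < dx)
    (Xε : Matrix (Fin dx) (Fin N) ℝ) (hXε : Xε.rank = N)
    (Y : Matrix (Fin dy) (Fin N) ℝ)
    (σ : Fin dy → ℝ) (hσ : Antitone σ)
    (V : Matrix (Fin dy) (Fin dy) ℝ) (hV : Vᵀ * V = 1)
    (hAV : Y * Yᵀ * V = V * Matrix.diagonal σ)
    (hgap : Y.rank ≤ min dx (min d1 dy) ∨
      ∃ (h1 : 1 ≤ min dx (min d1 dy)) (h2 : min dx (min d1 dy) < dy),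
        σ ⟨min dx (min d1 dy), h2⟩ < σ ⟨min dx (min d1 dy) - 1, by omega⟩)
    (U : Matrix (Fin dy) (Fin (min dx (min d1 dy))) ℝ)
    (hU : U = V.submatrix id (Fin.castLE ((min_le_right _ _).trans (min_le_right _ _))))
    (W2 : Matrix (Fin dy) (Fin d1) ℝ) (W1 : Matrix (Fin d1) (Fin dx) ℝ) :
    (∀ (W2' : Matrix (Fin dy) (Fin d1) ℝ) (W1' : Matrix (Fin d1) (Fin dx) ℝ),
        frobSq (W2 * W1 * Xε - Y) ≤ frobSq (W2' * W1' * Xε - Y)) ↔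
      ∃ R : Matrix (Fin dy) (Fin dx) ℝ, rowsInColPerp R Xε ∧
        W2 * W1 = U * Uᵀ * Y * (Xεᵀ * Xε)⁻¹ * Xεᵀ + R := by
  classical
  revert U hU
  set p := min dx (min d1 dy) with hpdef
  have hpdy : p ≤ dy := le_trans (min_le_right _ _) (min_le_right _ _)
  have hpd1 : p ≤ d1 := le_trans (min_le_right _ _) (min_le_left _ _)
  have hpdx : p ≤ dx := min_le_left _ _
  intro U hU
  have hVVt : V * Vᵀ = 1 := mul_eq_one_comm.mp hV
  set Z := Vᵀ * Y with hZdef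
  have hZZ : Z * Zᵀ = Matrix.diagonal σ := by
    rw [hZdef, Matrix.transpose_mul, Matrix.transpose_transpose]
    calc Vᵀ * Y * (Yᵀ * V) = Vᵀ * (Y * Yᵀ * V) := by simp only [Matrix.mul_assoc]
      _ = Vᵀ * (V * Matrix.diagonal σ) := by rw [hAV]
      _ = (Vᵀ * V) * Matrix.diagonal σ := by rw [Matrix.mul_assoc]
      _ = Matrix.diagonal σ := by rw [hV, Matrix.one_mul]
  have hfV : ∀ (M : Matrix (Fin dy) (Fin N) ℝ), frobSq (Vᵀ * M) = frobSq M := by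
    intro M
    rw [frobSq_eq_trace, frobSq_eq_trace, Matrix.transpose_mul, Matrix.transpose_transpose]
    calc (Vᵀ * M * (Mᵀ * V)).trace = ((Vᵀ * (M * Mᵀ)) * V).trace := by simp only [Matrix.mul_assoc]
      _ = (V * (Vᵀ * (M * Mᵀ))).trace := by rw [Matrix.trace_mul_comm]
      _ = ((V * Vᵀ) * (M * Mᵀ)).trace := by rw [Matrix.mul_assoc]
      _ = (M * Mᵀ).trace := by rw [hVVt, Matrix.one_mul]
  set Ep : Matrix (Fin dy) (Fin dy) ℝ :=
    Matrix.diagonal (fun i => if (i:ℕ) < p then 1 else 0) with hEpdef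
  have hUU : U * Uᵀ = V * Ep * Vᵀ := by
    ext a b
    rw [Matrix.mul_apply]
    have hrhs : (V * Ep * Vᵀ) a b = ∑ i : Fin dy, (if (i:ℕ) < p then V a i * V b i else 0) := by
      rw [Matrix.mul_apply]
      refine Finset.sum_congr rfl fun i _ => ?_
      rw [hEpdef, Matrix.mul_diagonal, Matrix.transpose_apply]
      by_cases h : (i:ℕ) < p <;> simp [h]
    rw [hrhs, ← sum_castLE hpdy (fun i => V a i * V b i)]
    refine Finset.sum_congr rfl fun j _ => ?_
    rw [hU]
    simp [Matrix.submatrix, Matrix.transpose_apply]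
  have hVZ : V * Z = Y := by rw [hZdef, ← Matrix.mul_assoc, hVVt, Matrix.one_mul]
  have hUUY : U * Uᵀ * Y = V * truncRows p Z := by
    have htr : Ep * Z = truncRows p Z := by
      ext i j
      rw [hEpdef, Matrix.diagonal_mul]
      by_cases h : (i:ℕ) < p <;> simp [truncRows, h]
    rw [hUU, Matrix.mul_assoc (V * Ep) Vᵀ Y, ← hZdef, Matrix.mul_assoc V Ep Z, htr]
  have hXdet : IsUnit (Xεᵀ * Xε).det := by
    have hr : (Xεᵀ * Xε).rank = N := by rw [Matrix.rank_transpose_mul_self, hXε]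
    have htop : LinearMap.range (Xεᵀ * Xε).mulVecLin = ⊤ := by
      apply Submodule.eq_top_of_finrank_eq
      rw [Module.finrank_fin_fun]
      exact hr
    have hsurj : Function.Surjective (Xεᵀ * Xε).mulVec := by
      intro y
      obtain ⟨x, hx⟩ := LinearMap.range_eq_top.1 htop y
      exact ⟨x, hx⟩
    exact (Matrix.isUnit_iff_isUnit_det _).1 (Matrix.mulVec_surjective_iff_isUnit.1 hsurj)
  have hXinv : (Xεᵀ * Xε)⁻¹ * (Xεᵀ * Xε) = 1 := Matrix.nonsing_inv_mul _ hXdet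
  have hUG : U * Uᵀ * Y * (Xεᵀ * Xε)⁻¹ * Xεᵀ * Xε = U * Uᵀ * Y := by
    calc U * Uᵀ * Y * (Xεᵀ * Xε)⁻¹ * Xεᵀ * Xε
        = U * Uᵀ * Y * ((Xεᵀ * Xε)⁻¹ * (Xεᵀ * Xε)) := by simp only [Matrix.mul_assoc]
      _ = U * Uᵀ * Y := by rw [hXinv, Matrix.mul_one]
  have hσ0 : ∀ j, 0 ≤ σ j := by
    intro j
    have hd : (Z * Zᵀ) j j = σ j := by rw [hZZ]; simp
    rw [← hd, diag_mul_transpose]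
    exact Finset.sum_nonneg fun _ _ => sq_nonneg _
  have hgap' : (∀ i : Fin dy, p ≤ (i:ℕ) → σ i = 0) ∨
      ∃ (_ : 1 ≤ p) (h2 : p < dy), σ ⟨p, h2⟩ < σ ⟨p - 1, by omega⟩ := by
    rcases hgap with hrk | hg
    · left
      intro i hi
      by_contra hne
      have hpos : 0 < σ i := lt_of_le_of_ne (hσ0 i) (Ne.symm hne)
      have hrank : (Matrix.diagonal σ).rank ≤ p := by
        rw [← hZZ, Matrix.rank_self_mul_transpose]
        exact le_trans (Matrix.rank_mul_le_right Vᵀ Y) hrk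
      rw [Matrix.rank_diagonal] at hrank
      have hmem : ∀ (k : ℕ) (hk : k < dy), k ≤ (i:ℕ) → σ ⟨k, hk⟩ ≠ 0 := by
        intro k hk hki
        have hle : σ i ≤ σ ⟨k, hk⟩ := hσ (by rw [Fin.le_def]; simpa)
        intro h0; rw [h0] at hle; linarith
      have hk_lt : ∀ k : Fin (p+1), (k:ℕ) < dy := by
        intro k; have h1 := i.isLt; have h2 := k.isLt; omega
      have hfinj : Function.Injective (fun k : Fin (p+1) =>
          (⟨⟨(k:ℕ), hk_lt k⟩, hmem (k:ℕ) (hk_lt k) (by have := k.isLt; omega)⟩ :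
            {j : Fin dy // σ j ≠ 0})) := by
        intro x y hxy
        simp only [Subtype.mk.injEq, Fin.mk.injEq] at hxy
        exact Fin.ext hxy
      have hcard := Fintype.card_le_of_injective _ hfinj
      rw [Fintype.card_fin] at hcard
      omega
    · right; exact hg
  have hrankW : ∀ (W2' : Matrix (Fin dy) (Fin d1) ℝ) (W1' : Matrix (Fin d1) (Fin dx) ℝ),
      (Vᵀ * (W2' * W1' * Xε)).rank ≤ p := by
    intro W2' W1'
    have h1 : (Vᵀ * (W2' * W1' * Xε)).rank ≤ (W2' * W1' * Xε).rank :=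
      Matrix.rank_mul_le_right _ _
    have hd1 : (W2' * W1' * Xε).rank ≤ d1 :=
      le_trans (Matrix.rank_mul_le_left _ _)
        (le_trans (Matrix.rank_mul_le_right _ _) (Matrix.rank_le_height W1'))
    have hdy : (W2' * W1' * Xε).rank ≤ dy :=
      le_trans (Matrix.rank_mul_le_left _ _)
        (le_trans (Matrix.rank_mul_le_left _ _) (Matrix.rank_le_height W2'))
    have hdx : (W2' * W1' * Xε).rank ≤ dx := by
      have := Matrix.rank_mul_le_right (W2' * W1') Xε
      omega
    exact le_trans h1 (le_min hdx (le_min hd1 hdy))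
  have hfrUU : frobSq (U * Uᵀ * Y - Y) = frobSq (truncRows p Z - Z) := by
    rw [← hfV (U * Uᵀ * Y - Y), Matrix.mul_sub, ← hZdef]
    have hvu : Vᵀ * (U * Uᵀ * Y) = truncRows p Z := by
      rw [hUUY, ← Matrix.mul_assoc, hV, Matrix.one_mul]
    rw [hvu]
  constructor
  · intro hmin
    set W2h : Matrix (Fin dy) (Fin d1) ℝ :=
      Matrix.of (fun i (j : Fin d1) => if h : (j:ℕ) < p then U i ⟨j, h⟩ else 0) with hW2h
    set W1h : Matrix (Fin d1) (Fin dx) ℝ :=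
      Matrix.of (fun (j : Fin d1) k =>
        if h : (j:ℕ) < p then (Uᵀ * Y * ((Xεᵀ * Xε)⁻¹ * Xεᵀ)) ⟨j, h⟩ k else 0) with hW1h
    have hpad : W2h * W1h = U * (Uᵀ * Y * ((Xεᵀ * Xε)⁻¹ * Xεᵀ)) :=
      pad_mul hpd1 U (Uᵀ * Y * ((Xεᵀ * Xε)⁻¹ * Xεᵀ))
    have hprod : W2h * W1h * Xε = U * Uᵀ * Y := by
      rw [hpad]
      calc U * (Uᵀ * Y * ((Xεᵀ * Xε)⁻¹ * Xεᵀ)) * Xε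
          = U * Uᵀ * Y * (Xεᵀ * Xε)⁻¹ * Xεᵀ * Xε := by simp only [Matrix.mul_assoc]
        _ = U * Uᵀ * Y := hUG
    have hcomp := hmin W2h W1h
    rw [hprod] at hcomp
    set C := Vᵀ * (W2 * W1 * Xε) with hCdef
    obtain ⟨hEY1, hEY2⟩ := EY σ hσ Z hZZ hgap' C (hrankW W2 W1)
    have hfr1 : frobSq (W2 * W1 * Xε - Y) = frobSq (C - Z) := by
      rw [← hfV (W2 * W1 * Xε - Y), Matrix.mul_sub]
    have hle : frobSq (C - Z) ≤ frobSq (truncRows p Z - Z) := by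
      rw [← hfr1, ← hfrUU]; exact hcomp
    have hCeq := hEY2 hle
    have hBeq : W2 * W1 * Xε = U * Uᵀ * Y := by
      have hv : V * C = V * truncRows p Z := by rw [hCeq]
      rw [hCdef, ← Matrix.mul_assoc, hVVt, Matrix.one_mul] at hv
      rw [hv, ← hUUY]
    refine ⟨W2 * W1 - U * Uᵀ * Y * (Xεᵀ * Xε)⁻¹ * Xεᵀ, ?_, by abel⟩
    have hRX : (W2 * W1 - U * Uᵀ * Y * (Xεᵀ * Xε)⁻¹ * Xεᵀ) * Xε = 0 := by
      rw [Matrix.sub_mul, hBeq, hUG, sub_self]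
    intro i v hv
    induction hv using Submodule.span_induction with
    | mem x hx =>
      obtain ⟨j, rfl⟩ := hx
      have h0 : ((W2 * W1 - U * Uᵀ * Y * (Xεᵀ * Xε)⁻¹ * Xεᵀ) * Xε) i j = 0 := by
        rw [hRX]; rfl
      rw [Matrix.mul_apply] at h0
      exact h0
    | zero => simp
    | add x y hx hy ihx ihy =>
      have : ∀ k, (W2 * W1 - U * Uᵀ * Y * (Xεᵀ * Xε)⁻¹ * Xεᵀ) i k * (x + y) k
          = (W2 * W1 - U * Uᵀ * Y * (Xεᵀ * Xε)⁻¹ * Xεᵀ) i k * x k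
            + (W2 * W1 - U * Uᵀ * Y * (Xεᵀ * Xε)⁻¹ * Xεᵀ) i k * y k := by
        intro k; simp [mul_add]
      rw [Finset.sum_congr rfl fun k _ => this k, Finset.sum_add_distrib, ihx, ihy, add_zero]
    | smul a x hx ih =>
      have : ∀ k, (W2 * W1 - U * Uᵀ * Y * (Xεᵀ * Xε)⁻¹ * Xεᵀ) i k * (a • x) k
          = a * ((W2 * W1 - U * Uᵀ * Y * (Xεᵀ * Xε)⁻¹ * Xεᵀ) i k * x k) := by
        intro k; simp [Pi.smul_apply, smul_eq_mul]; ring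
      rw [Finset.sum_congr rfl fun k _ => this k, ← Finset.mul_sum, ih, mul_zero]
  · rintro ⟨R, hR, hW⟩ W2' W1'
    have hRX : R * Xε = 0 := by
      ext i j
      have hmem : Xεᵀ j ∈ Submodule.span ℝ (Set.range Xεᵀ) :=
        Submodule.subset_span ⟨j, rfl⟩
      have := hR i (Xεᵀ j) hmem
      rw [Matrix.mul_apply, Matrix.zero_apply]
      simpa using this
    have hBeq : W2 * W1 * Xε = U * Uᵀ * Y := by
      rw [hW, Matrix.add_mul, hRX, add_zero, hUG]
    set C' := Vᵀ * (W2' * W1' * Xε) with hC'def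
    obtain ⟨hEY1, _⟩ := EY σ hσ Z hZZ hgap' C' (hrankW W2' W1')
    calc frobSq (W2 * W1 * Xε - Y) = frobSq (truncRows p Z - Z) := by rw [hBeq, hfrUU]
      _ ≤ frobSq (C' - Z) := hEY1
      _ = frobSq (W2' * W1' * Xε - Y) := by
          rw [← hfV (W2' * W1' * Xε - Y), Matrix.mul_sub]
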